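/- Let G be a finite σ-soluble group, N a minimal normal subgroup of G which is a σ_1-group, and A a σ-nilpotent subgroup of G such that the Hall σ_1'-subgroup A_{σ_1'} of A centralizes N. Then AN is σ-nilpotent. -/

import Mathlib

open Pointwise

/-- `σ` is a partition of the set of all primes. -/
def IsPrimePartition {ι : Type*} (σ : ι → Set ℕ) : Prop :=
  (∀ i, ∀ p ∈ σ i, p.Prime) ∧ (∀ p : ℕ, p.Prime → ∃! i, p ∈ σ i)

/-- every prime dividing `n` lies in `σ i`. -/
def PrimaryIn {ι : Type*} (σ : ι → Set ℕ) (i : ι) (n : ℕ) : Prop :=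
  ∀ p : ℕ, p.Prime → p ∣ n → p ∈ σ i

/-- `σ i ∈ σ(G)` : some prime of `σ i` divides `|G|`. -/
def MemSigma {ι : Type*} (σ : ι → Set ℕ) (i : ι) (G : Type*) [Group G] : Prop :=
  ∃ p : ℕ, p.Prime ∧ p ∈ σ i ∧ p ∣ Nat.card G

/-- the centralizer of the factor `H/K` in `G` (as a set). -/
def chiefCentralizer {G : Type*} [Group G] (H K : Subgroup G) : Set G :=
  {g : G | ∀ h ∈ H, g * h * g⁻¹ * h⁻¹ ∈ K}

/-- `H/K` is a chief factor of `G`. -/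
def IsChiefFactor {G : Type*} [Group G] (H K : Subgroup G) : Prop :=
  H.Normal ∧ K.Normal ∧ K < H ∧
    ∀ L : Subgroup G, L.Normal → K ≤ L → L ≤ H → L = K ∨ L = H

/-- `H/K` is σ-central in `G` : `(H/K) ⋊ (G/C_G(H/K))` is σ-primary,
i.e. every prime dividing `|H/K| · |G/C_G(H/K)|` lies in one block of σ. -/
def SigmaCentral {ι : Type*} (σ : ι → Set ℕ) {G : Type*} [Group G]
    (H K : Subgroup G) : Prop :=
  ∃ i, PrimaryIn σ i ((Nat.card H / Nat.card K) * (Nat.card G / Nat.card (chiefCentralizer H K)))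

/-- `G` is σ-nilpotent: every chief factor is σ-central. -/
def SigmaNilpotent {ι : Type*} (σ : ι → Set ℕ) (G : Type*) [Group G] : Prop :=
  ∀ H K : Subgroup G, IsChiefFactor H K → SigmaCentral σ H K

/-- `G` is σ-soluble: every chief factor is σ-primary. -/
def SigmaSoluble {ι : Type*} (σ : ι → Set ℕ) (G : Type*) [Group G] : Prop :=
  ∀ H K : Subgroup G, IsChiefFactor H K → ∃ i, PrimaryIn σ i (Nat.card H / Nat.card K)

/-- `H` is a Hall π-subgroup of `G`. -/
def IsHall {G : Type*} [Group G] (π : Set ℕ) (H : Subgroup G) : Prop :=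
  (∀ p : ℕ, p.Prime → p ∣ Nat.card H → p ∈ π) ∧
  (∀ p : ℕ, p.Prime → p ∣ H.index → p ∉ π)

/-- `H` is a π-subgroup of `G`. -/
def IsPiSubgroup {G : Type*} [Group G] (π : Set ℕ) (H : Subgroup G) : Prop :=
  ∀ p : ℕ, p.Prime → p ∣ Nat.card H → p ∈ π

/-- `K` is a Hall π-subgroup of the subgroup `A` of `G`. -/
def IsHallIn {G : Type*} [Group G] (π : Set ℕ) (K A : Subgroup G) : Prop :=
  K ≤ A ∧ (∀ p : ℕ, p.Prime → p ∣ Nat.card K → p ∈ π) ∧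
    (∀ p : ℕ, p.Prime → p ∣ K.relIndex A → p ∉ π)

/-- `G` satisfies `D_π`. -/
def SatisfiesD (π : Set ℕ) (G : Type*) [Group G] : Prop :=
  (∃ H : Subgroup G, IsHall π H) ∧
  (∀ H K : Subgroup G, IsHall π H → IsHall π K →
      ∃ g : G, K = Subgroup.map (MulAut.conj g).toMonoidHom H) ∧
  (∀ S : Subgroup G, IsPiSubgroup π S →
      ∃ H : Subgroup G, IsHall π H ∧ S ≤ H)

/-- `N` is a minimal normal subgroup of `G`. -/
def IsMinimalNormal {G : Type*} [Group G] (N : Subgroup G) : Prop :=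
  N.Normal ∧ N ≠ ⊥ ∧ ∀ L : Subgroup G, L.Normal → L ≤ N → L = ⊥ ∨ L = N

/-- the σ-Fitting subgroup: product of all normal σ-nilpotent subgroups. -/
def sigmaFitting {ι : Type*} (σ : ι → Set ℕ) (G : Type*) [Group G] : Subgroup G :=
  ⨆ H ∈ {H : Subgroup G | H.Normal ∧ SigmaNilpotent σ H}, H

/-- `O_π(G)`: the largest normal π-subgroup, i.e. product of all normal π-subgroups. -/
def Opi (π : Set ℕ) (G : Type*) [Group G] : Subgroup G :=
  ⨆ H ∈ {H : Subgroup G | H.Normal ∧ IsPiSubgroup π H}, H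
section ChiefHelpers

variable {X : Type*} [Group X]

/-- `chiefCentralizer H K` as a subgroup, when `H` and `K` are normal. -/
def ccSub (H K : Subgroup X) (hH : H.Normal) (hK : K.Normal) : Subgroup X where
  carrier := chiefCentralizer H K
  one_mem' := by
    intro h hh
    have e : (1 : X) * h * 1⁻¹ * h⁻¹ = 1 := by group
    rw [e]; exact K.one_mem
  mul_mem' := by
    intro a b ha hb h hh
    have h1 : a * (b * h * b⁻¹ * h⁻¹) * a⁻¹ ∈ K := hK.conj_mem _ (hb h hh) a
    have h2 : a * h * a⁻¹ * h⁻¹ ∈ K := ha h hh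
    have h3 := K.mul_mem h1 h2
    have e : a * (b * h * b⁻¹ * h⁻¹) * a⁻¹ * (a * h * a⁻¹ * h⁻¹)
        = a * b * h * (a * b)⁻¹ * h⁻¹ := by group
    rwa [e] at h3
  inv_mem' := by
    intro a ha h hh
    have h' : a⁻¹ * h * a ∈ H := by
      have := hH.conj_mem h hh a⁻¹
      rwa [inv_inv] at this
    have h1 := ha _ h'
    have h2 := K.inv_mem h1
    have e : (a * (a⁻¹ * h * a) * a⁻¹ * (a⁻¹ * h * a)⁻¹)⁻¹ = a⁻¹ * h * a⁻¹⁻¹ * h⁻¹ := by group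
    rwa [e] at h2

lemma mem_ccSub {H K : Subgroup X} {hH : H.Normal} {hK : K.Normal} {g : X} :
    g ∈ ccSub H K hH hK ↔ ∀ h ∈ H, g * h * g⁻¹ * h⁻¹ ∈ K := Iff.rfl

lemma card_cc (H K : Subgroup X) (hH : H.Normal) (hK : K.Normal) :
    Nat.card (chiefCentralizer H K) = Nat.card (ccSub H K hH hK) := rfl

lemma card_subgroupOf' (H K : Subgroup X) (h : H ≤ K) :
    Nat.card (H.subgroupOf K) = Nat.card H :=
  Nat.card_congr (Subgroup.subgroupOfEquivOfLe h).toEquiv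

lemma subgroupOf_inf_eq (J H : Subgroup X) : J.subgroupOf H = (J ⊓ H).subgroupOf H := by
  ext x
  simp [Subgroup.mem_subgroupOf, x.2]

lemma relindex_mul_card' {K H : Subgroup X} (h : K ≤ H) :
    K.relIndex H * Nat.card K = Nat.card H := by
  have e := Subgroup.index_mul_card (K.subgroupOf H)
  rwa [card_subgroupOf' K H h] at e

lemma card_div_card_eq_relindex [Finite X] {K H : Subgroup X} (h : K ≤ H) :
    Nat.card H / Nat.card K = K.relIndex H := by
  have e := relindex_mul_card' h
  have pos : 0 < Nat.card K := Nat.card_pos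
  rw [← e, Nat.mul_div_cancel _ pos]

lemma card_div_card_eq_index [Finite X] (H : Subgroup X) :
    Nat.card X / Nat.card H = H.index := by
  have e := Subgroup.index_mul_card H
  have pos : 0 < Nat.card H := Nat.card_pos
  rw [← e, Nat.mul_div_cancel _ pos]

lemma sup_card_dvd [Finite X] (S T : Subgroup X) (hT : T.Normal) :
    Nat.card (S ⊔ T : Subgroup X) ∣ Nat.card S * Nat.card T := by
  haveI := hT
  have e1 : Nat.card (S ⊔ T : Subgroup X) =
      Nat.card (↥(S ⊔ T) ⧸ T.subgroupOf (S ⊔ T)) * Nat.card (T.subgroupOf (S ⊔ T)) :=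
    Subgroup.card_eq_card_quotient_mul_card_subgroup _
  have e2 : Nat.card (↥(S ⊔ T) ⧸ T.subgroupOf (S ⊔ T)) = Nat.card (↥S ⧸ T.subgroupOf S) :=
    (Nat.card_congr (QuotientGroup.quotientInfEquivProdNormalQuotient S T).toEquiv).symm
  have e3 : Nat.card (T.subgroupOf (S ⊔ T)) = Nat.card T := card_subgroupOf' T _ le_sup_right
  rw [e1, e2, e3]
  exact mul_dvd_mul (Subgroup.card_quotient_dvd_card _) dvd_rfl

lemma card_map_mul_card {Y : Type*} [Group Y] (f : X →* Y) (H : Subgroup X) :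
    Nat.card (H.map f) * Nat.card (f.ker ⊓ H : Subgroup X) = Nat.card H := by
  have e1 : Nat.card H = Nat.card (↥H ⧸ (f.domRestrict H).ker) * Nat.card ((f.domRestrict H).ker) :=
    Subgroup.card_eq_card_quotient_mul_card_subgroup _
  have e2 : Nat.card (↥H ⧸ (f.domRestrict H).ker) = Nat.card (H.map f) := by
    rw [← MonoidHom.restrict_range H f]
    exact Nat.card_congr (QuotientGroup.quotientKerEquivRange (f.domRestrict H)).toEquiv
  have e3 : Nat.card ((f.domRestrict H).ker) = Nat.card (f.ker ⊓ H : Subgroup X) := by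
    rw [MonoidHom.ker_domRestrict, subgroupOf_inf_eq]
    exact card_subgroupOf' _ _ inf_le_right
  rw [e1, e2, e3]

/-- σ-nilpotency passes to quotients (surjective images). -/
lemma sigmaNilpotent_of_surjective {ι : Type*} {σ : ι → Set ℕ} {X Y : Type*} [Group X] [Group Y]
    [Finite X] (f : X →* Y) (hf : Function.Surjective f) (hX : SigmaNilpotent σ X) :
    SigmaNilpotent σ Y := by
  haveI : Finite Y := Finite.of_surjective f hf
  intro Hb Kb hcf
  obtain ⟨hHbN, hKbN, hltb, hchiefb⟩ := hcf
  have hHN : (Hb.comap f).Normal := hHbN.comap f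
  have hKN : (Kb.comap f).Normal := hKbN.comap f
  have hkerK : f.ker ≤ Kb.comap f := by
    intro x hx
    have hx1 : f x = 1 := hx
    show f x ∈ Kb
    rw [hx1]; exact Kb.one_mem
  have hKH : Kb.comap f ≤ Hb.comap f := Subgroup.comap_mono hltb.le
  have hmapH : (Hb.comap f).map f = Hb := Subgroup.map_comap_eq_self_of_surjective hf Hb
  have hmapK : (Kb.comap f).map f = Kb := Subgroup.map_comap_eq_self_of_surjective hf Kb
  have hKHlt : Kb.comap f < Hb.comap f := lt_of_le_of_ne hKH (by
    intro e
    exact hltb.ne (by rw [← hmapK, e, hmapH]))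
  have hchief : ∀ L : Subgroup X, L.Normal → Kb.comap f ≤ L → L ≤ Hb.comap f →
      L = Kb.comap f ∨ L = Hb.comap f := by
    intro L hLn hKL hLH
    have hLker : f.ker ≤ L := hkerK.trans hKL
    have hmemb := hchiefb (L.map f) (hLn.map f hf)
      (by rw [← hmapK]; exact Subgroup.map_mono hKL)
      (by rw [← hmapH]; exact Subgroup.map_mono hLH)
    rcases hmemb with h | h
    · left
      have hself := (Subgroup.comap_map_eq_self hLker).symm
      rw [h] at hself
      exact hself
    · right
      have hself := (Subgroup.comap_map_eq_self hLker).symm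
      rw [h] at hself
      exact hself
  obtain ⟨j, hj⟩ := hX (Hb.comap f) (Kb.comap f) ⟨hHN, hKN, hKHlt, hchief⟩
  have hCC : ccSub (Hb.comap f) (Kb.comap f) hHN hKN = (ccSub Hb Kb hHbN hKbN).comap f := by
    ext g
    constructor
    · intro hg
      have hg' : ∀ h ∈ Hb.comap f, g * h * g⁻¹ * h⁻¹ ∈ Kb.comap f := hg
      show f g ∈ ccSub Hb Kb hHbN hKbN
      rw [mem_ccSub]
      intro hb hhb
      rw [← hmapH] at hhb
      obtain ⟨h, hh, rfl⟩ := Subgroup.mem_map.mp hhb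
      have e : f g * f h * (f g)⁻¹ * (f h)⁻¹ = f (g * h * g⁻¹ * h⁻¹) := by
        simp [map_mul, map_inv, mul_assoc]
      rw [e, ← hmapK]
      exact Subgroup.mem_map_of_mem f (hg' h hh)
    · intro hg
      have hg' : ∀ hb ∈ Hb, f g * hb * (f g)⁻¹ * hb⁻¹ ∈ Kb :=
        mem_ccSub.mp (Subgroup.mem_comap.mp hg)
      rw [mem_ccSub]
      intro h hh
      have h1 := hg' (f h) (by rw [← hmapH]; exact Subgroup.mem_map_of_mem f hh)
      have e : f g * f h * (f g)⁻¹ * (f h)⁻¹ = f (g * h * g⁻¹ * h⁻¹) := by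
        simp [map_mul, map_inv, mul_assoc]
      rw [e] at h1
      exact h1
  have hidx : (ccSub (Hb.comap f) (Kb.comap f) hHN hKN).index = (ccSub Hb Kb hHbN hKbN).index := by
    rw [hCC]; exact Subgroup.index_comap_of_surjective _ hf
  have kerpos : 0 < Nat.card f.ker := Nat.card_pos
  have hcH : Nat.card Hb * Nat.card f.ker = Nat.card (Hb.comap f) := by
    have := card_map_mul_card f (Hb.comap f)
    rwa [hmapH, inf_eq_left.mpr (hkerK.trans hKH)] at this
  have hcK : Nat.card Kb * Nat.card f.ker = Nat.card (Kb.comap f) := by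
    have := card_map_mul_card f (Kb.comap f)
    rwa [hmapK, inf_eq_left.mpr hkerK] at this
  have hratio : Nat.card (Hb.comap f) / Nat.card (Kb.comap f) = Nat.card Hb / Nat.card Kb := by
    rw [← hcH, ← hcK, Nat.mul_div_mul_right _ _ kerpos]
  refine ⟨j, ?_⟩
  have e2 : Nat.card X / Nat.card (chiefCentralizer (Hb.comap f) (Kb.comap f)) =
      Nat.card Y / Nat.card (chiefCentralizer Hb Kb) := by
    rw [card_cc _ _ hHN hKN, card_cc _ _ hHbN hKbN,
      card_div_card_eq_index, card_div_card_eq_index, hidx]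
  rw [hratio, e2] at hj
  exact hj

end ChiefHelpers

/-- If `N` is a minimal normal `σ_i`-subgroup of a σ-soluble group `G`, `A ≤ G`
is σ-nilpotent, and the Hall `σ_i'`-subgroup of `A` centralizes `N`, then `AN`
is σ-nilpotent. -/
theorem join_minimal_normal_sigma_nilpotent_of_hall_centralizes
    {ι : Type*} (σ : ι → Set ℕ) (hσ : IsPrimePartition σ)
    (G : Type*) [Group G] [Finite G] (hsol : SigmaSoluble σ G)
    (N : Subgroup G) (hN : IsMinimalNormal N)
    (i : ι) (hNi : IsPiSubgroup (σ i) N)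
    (A : Subgroup G) (hA : SigmaNilpotent σ A)
    (Aπ : Subgroup G) (hAπ : IsHallIn {p : ℕ | p.Prime ∧ p ∉ σ i} Aπ A)
    (hcent : Aπ ≤ Subgroup.centralizer (N : Set G)) :
    SigmaNilpotent σ ((A ⊔ N : Subgroup G) : Type _) := by
  classical
  obtain ⟨hNnormal, -, -⟩ := hN
  haveI : N.Normal := hNnormal
  have hAM : A ≤ A ⊔ N := le_sup_left
  have hNM : N ≤ A ⊔ N := le_sup_right
  have hAπA : Aπ ≤ A := hAπ.1
  have hAπM : Aπ ≤ A ⊔ N := hAπA.trans hAM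
  set N' : Subgroup ↥(A ⊔ N) := N.subgroupOf (A ⊔ N) with hN'def
  have hN'n : N'.Normal := hNnormal.subgroupOf (A ⊔ N)
  haveI := hN'n
  set A' : Subgroup ↥(A ⊔ N) := A.subgroupOf (A ⊔ N) with hA'def
  set Aπ' : Subgroup ↥(A ⊔ N) := Aπ.subgroupOf (A ⊔ N) with hAπ'def
  have hAπ'A' : Aπ' ≤ A' := fun x hx => hAπA hx
  have cardN' : Nat.card N' = Nat.card N := card_subgroupOf' N (A ⊔ N) hNM
  -- every prime dividing the index of `Aπ'` in `A ⊔ N` lies in `σ i`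
  have hAπ'idx : ∀ p : ℕ, p.Prime → p ∣ Aπ'.index → p ∈ σ i := by
    intro p hp hpd
    have e : Aπ'.relIndex A' * A'.index = Aπ'.index := Subgroup.relIndex_mul_index hAπ'A'
    rw [← e] at hpd
    rcases hp.dvd_mul.mp hpd with h | h
    · rw [hAπ'def, hA'def, Subgroup.relIndex_subgroupOf hAM] at h
      have := hAπ.2.2 p hp h
      by_contra hpn
      exact this ⟨hp, hpn⟩
    · -- `A'.index` divides `|N|`
      have hidxA' : A'.index ∣ Nat.card N := by
        have e2 : A'.index * Nat.card A' = Nat.card ↥(A ⊔ N) := Subgroup.index_mul_card A'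
        have cardA' : Nat.card A' = Nat.card A := card_subgroupOf' A (A ⊔ N) hAM
        rw [cardA'] at e2
        have hdvd : Nat.card ↥(A ⊔ N) ∣ Nat.card N * Nat.card A := by
          have := sup_card_dvd A N hNnormal
          rwa [mul_comm] at this
        rw [← e2] at hdvd
        exact (Nat.mul_dvd_mul_iff_right (Nat.card_pos : 0 < Nat.card A)).mp hdvd
      exact hNi p hp (h.trans hidxA')
  intro H K hcf
  obtain ⟨hHn, hKn, hKH, hchief⟩ := hcf
  haveI := hHn
  haveI := hKn
  have hJn : (N' ⊔ K).Normal := Subgroup.sup_normal N' K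
  have hLn : (H ⊓ (N' ⊔ K)).Normal :=
    ⟨fun x hx g => ⟨hHn.conj_mem x hx.1 g, hJn.conj_mem x hx.2 g⟩⟩
  rcases hchief (H ⊓ (N' ⊔ K)) hLn (le_inf hKH.le le_sup_right) inf_le_left with hL | hL
  · -- Case B : `H ⊓ (N' ⊔ K) = K`; pass to the quotient `(A ⊔ N) / N'`
    set π : ↥(A ⊔ N) →* ↥(A ⊔ N) ⧸ N' := QuotientGroup.mk' N' with hπdef
    have hπs : Function.Surjective π := QuotientGroup.mk'_surjective N'
    have hπker : π.ker = N' := QuotientGroup.ker_mk' N'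
    -- `A` surjects onto the quotient
    have hφs : Function.Surjective (π.comp (Subgroup.inclusion hAM)) := by
      intro q
      obtain ⟨m, rfl⟩ := hπs q
      have hm : (m : G) ∈ (↑A * ↑N : Set G) := by
        rw [← Subgroup.mul_normal A N]
        exact m.2
      obtain ⟨a, ha, n, hn, hm'⟩ := hm
      refine ⟨⟨a, ha⟩, ?_⟩
      show π (Subgroup.inclusion hAM ⟨a, ha⟩) = π m
      rw [hπdef, QuotientGroup.mk'_eq_mk']
      refine ⟨⟨n, hNM hn⟩, (Subgroup.mem_subgroupOf).mpr hn, ?_⟩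
      apply Subtype.ext
      simpa using hm'
    have hQnil : SigmaNilpotent σ (↥(A ⊔ N) ⧸ N') :=
      sigmaNilpotent_of_surjective _ hφs hA
    have hHbn : (H.map π).Normal := hHn.map π hπs
    have hKbn : (K.map π).Normal := hKn.map π hπs
    have hcomapK : (K.map π).comap π = K ⊔ N' := by rw [Subgroup.comap_map_eq, hπker]
    have hcomapH : (H.map π).comap π = H ⊔ N' := by rw [Subgroup.comap_map_eq, hπker]
    have hKbHb : K.map π ≤ H.map π := Subgroup.map_mono hKH.le
    have hne : K.map π ≠ H.map π := by
      intro e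
      have h1 : H ≤ N' ⊔ K := by
        have h0 : H ≤ H ⊔ N' := le_sup_left
        rw [← hcomapH, ← e, hcomapK] at h0
        rwa [sup_comm K N'] at h0
      have h2 : H ⊓ (N' ⊔ K) = H := inf_eq_left.mpr h1
      rw [hL] at h2
      exact hKH.ne h2
    have hchiefb : ∀ Lb : Subgroup (↥(A ⊔ N) ⧸ N'), Lb.Normal → K.map π ≤ Lb →
        Lb ≤ H.map π → Lb = K.map π ∨ Lb = H.map π := by
      intro Lb hLbn hKbLb hLbHb
      have hNL : N' ≤ Lb.comap π := by
        intro x hx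
        have hx1 : π x = 1 := by rw [← hπker] at hx; exact hx
        show π x ∈ Lb
        rw [hx1]; exact Lb.one_mem
      have hKL : K ≤ Lb.comap π :=
        (Subgroup.le_comap_map (f := π) K).trans (Subgroup.comap_mono hKbLb)
      have hLn2 : (Lb.comap π ⊓ H).Normal :=
        ⟨fun x hx g => ⟨(hLbn.comap π).conj_mem x hx.1 g, hHn.conj_mem x hx.2 g⟩⟩
      rcases hchief (Lb.comap π ⊓ H) hLn2 (le_inf hKL hKH.le) inf_le_right with h | h
      · left
        have hL0le : Lb.comap π ≤ N' ⊔ K := by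
          intro x hx
          have hxH : x ∈ N' ⊔ H := by
            rw [sup_comm N' H, ← hcomapH]
            exact Subgroup.comap_mono hLbHb hx
          have hxH' : x ∈ (↑N' * ↑H : Set ↥(A ⊔ N)) := by
            rw [← Subgroup.normal_mul N' H]
            exact hxH
          obtain ⟨n, hn, y, hy, hxe⟩ := hxH'
          have hyL : y ∈ Lb.comap π := by
            have hnL : n ∈ Lb.comap π := hNL hn
            have hmul : n⁻¹ * x ∈ Lb.comap π :=
              Subgroup.mul_mem _ (Subgroup.inv_mem _ hnL) hx
            rw [← hxe, ← mul_assoc, inv_mul_cancel, one_mul] at hmul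
            exact hmul
          have hyK : y ∈ K := by
            have hy2 : y ∈ Lb.comap π ⊓ H := ⟨hyL, hy⟩
            rw [h] at hy2
            exact hy2
          rw [← hxe]
          exact Subgroup.mul_mem _ (Subgroup.mem_sup_left hn) (Subgroup.mem_sup_right hyK)
        have hle2 : Lb ≤ K.map π := by
          have hmono := Subgroup.map_mono (f := π) hL0le
          rw [Subgroup.map_comap_eq_self_of_surjective hπs] at hmono
          refine hmono.trans ?_
          rw [Subgroup.map_sup]
          apply sup_le
          · intro z hz
            obtain ⟨x, hx, rfl⟩ := Subgroup.mem_map.mp hz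
            have hx1 : π x = 1 := by rw [← hπker] at hx; exact hx
            rw [hx1]
            exact (K.map π).one_mem
          · exact le_rfl
        exact le_antisymm hle2 hKbLb
      · right
        have hHL : H ≤ Lb.comap π := inf_eq_right.mp h
        have hmono := Subgroup.map_mono (f := π) hHL
        rw [Subgroup.map_comap_eq_self_of_surjective hπs] at hmono
        exact le_antisymm hLbHb hmono
    obtain ⟨j, hj⟩ := hQnil (H.map π) (K.map π)
      ⟨hHbn, hKbn, lt_of_le_of_ne hKbHb hne, hchiefb⟩
    have hinfHK : N' ⊓ H = N' ⊓ K := by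
      apply le_antisymm
      · intro x hx
        have hx2 : x ∈ H ⊓ (N' ⊔ K) := ⟨hx.2, Subgroup.mem_sup_left hx.1⟩
        rw [hL] at hx2
        exact ⟨hx.1, hx2⟩
      · exact inf_le_inf_left N' hKH.le
    have hcardH : Nat.card (H.map π) * Nat.card (N' ⊓ K : Subgroup ↥(A ⊔ N)) = Nat.card H := by
      have := card_map_mul_card π H
      rwa [hπker, hinfHK] at this
    have hcardK : Nat.card (K.map π) * Nat.card (N' ⊓ K : Subgroup ↥(A ⊔ N)) = Nat.card K := by
      have := card_map_mul_card π K
      rwa [hπker] at this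
    have hratio : Nat.card H / Nat.card K = Nat.card (H.map π) / Nat.card (K.map π) := by
      rw [← hcardH, ← hcardK, Nat.mul_div_mul_right _ _ (Nat.card_pos :
        0 < Nat.card (N' ⊓ K : Subgroup ↥(A ⊔ N)))]
    have hCC : ccSub H K hHn hKn = (ccSub (H.map π) (K.map π) hHbn hKbn).comap π := by
      ext g
      constructor
      · intro hg
        have hg' : ∀ h ∈ H, g * h * g⁻¹ * h⁻¹ ∈ K := hg
        show π g ∈ ccSub (H.map π) (K.map π) hHbn hKbn
        rw [mem_ccSub]
        intro hb hhb
        obtain ⟨h, hh, rfl⟩ := Subgroup.mem_map.mp hhb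
        have e : π g * π h * (π g)⁻¹ * (π h)⁻¹ = π (g * h * g⁻¹ * h⁻¹) := by
          simp [map_mul, map_inv, mul_assoc]
        rw [e]
        exact Subgroup.mem_map_of_mem π (hg' h hh)
      · intro hg
        have hg' : ∀ hb ∈ H.map π, π g * hb * (π g)⁻¹ * hb⁻¹ ∈ K.map π :=
          mem_ccSub.mp (Subgroup.mem_comap.mp hg)
        rw [mem_ccSub]
        intro h hh
        have h1 := hg' (π h) (Subgroup.mem_map_of_mem π hh)
        have e : π g * π h * (π g)⁻¹ * (π h)⁻¹ = π (g * h * g⁻¹ * h⁻¹) := by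
          simp [map_mul, map_inv, mul_assoc]
        rw [e] at h1
        have h2 : g * h * g⁻¹ * h⁻¹ ∈ (K.map π).comap π := h1
        rw [hcomapK] at h2
        have h3 : g * h * g⁻¹ * h⁻¹ ∈ H := H.mul_mem (hHn.conj_mem h hh g) (H.inv_mem hh)
        have h4 : g * h * g⁻¹ * h⁻¹ ∈ H ⊓ (N' ⊔ K) := ⟨h3, by rwa [sup_comm N' K]⟩
        rw [hL] at h4
        exact h4
    have hidx2 : (ccSub H K hHn hKn).index = (ccSub (H.map π) (K.map π) hHbn hKbn).index := by
      rw [hCC]; exact Subgroup.index_comap_of_surjective _ hπs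
    refine ⟨j, ?_⟩
    have e1 : Nat.card ↥(A ⊔ N) / Nat.card (chiefCentralizer H K) =
        Nat.card (↥(A ⊔ N) ⧸ N') / Nat.card (chiefCentralizer (H.map π) (K.map π)) := by
      rw [card_cc H K hHn hKn, card_cc _ _ hHbn hKbn,
        card_div_card_eq_index, card_div_card_eq_index, hidx2]
    rw [hratio, e1]
    exact hj
  · -- Case A : `H ≤ N' ⊔ K`; here the factor is `σ i`-central
    have hHJ : H ≤ N' ⊔ K := inf_eq_left.mp hL
    refine ⟨i, ?_⟩
    have hr1 : Nat.card H / Nat.card K = K.relIndex H := card_div_card_eq_relindex hKH.le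
    have hr2 : Nat.card ↥(A ⊔ N) / Nat.card (chiefCentralizer H K) = (ccSub H K hHn hKn).index := by
      rw [card_cc H K hHn hKn]; exact card_div_card_eq_index _
    rw [hr1, hr2]
    intro p hp hpd
    rcases hp.dvd_mul.mp hpd with h | h
    · -- `p` divides `|H/K|`, which divides `|N|`
      have d1 : K.relIndex H ∣ K.relIndex (N' ⊔ K) :=
        ⟨H.relIndex (N' ⊔ K), (Subgroup.relIndex_mul_relIndex K H (N' ⊔ K) hKH.le hHJ).symm⟩
      have d2 : K.relIndex (N' ⊔ K) ∣ Nat.card N' := by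
        have e := relindex_mul_card' (le_sup_right : K ≤ N' ⊔ K)
        have hdvd : Nat.card (N' ⊔ K : Subgroup ↥(A ⊔ N)) ∣ Nat.card N' * Nat.card K := by
          have h' := sup_card_dvd K N' hN'n
          rw [sup_comm K N'] at h'
          rwa [mul_comm] at h'
        rw [← e] at hdvd
        exact (Nat.mul_dvd_mul_iff_right (Nat.card_pos : 0 < Nat.card K)).mp hdvd
      have : p ∣ Nat.card N := by rw [← cardN']; exact (h.trans d1).trans d2
      exact hNi p hp this
    · -- `p` divides the index of the centralizer, which divides the index of `Aπ'`
      have hsub : Aπ' ≤ ccSub H K hHn hKn := by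
        intro g hg
        show ∀ h ∈ H, g * h * g⁻¹ * h⁻¹ ∈ K
        intro h hh
        have hh' : h ∈ (↑N' * ↑K : Set ↥(A ⊔ N)) := by
          rw [← Subgroup.normal_mul N' K]
          exact hHJ hh
        obtain ⟨n, hn, k, hk, rfl⟩ := hh'
        have hgn : g * n = n * g := by
          have hgA : (g : G) ∈ Aπ := hg
          have hnN : (n : G) ∈ N := hn
          have hc := (Subgroup.mem_centralizer_iff.mp (hcent hgA)) (n : G) hnN
          exact Subtype.ext (by simpa using hc.symm)
        have hk' : g * k * g⁻¹ * k⁻¹ ∈ K := K.mul_mem (hKn.conj_mem k hk g) (K.inv_mem hk)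
        have e : g * (n * k) * g⁻¹ * (n * k)⁻¹ = n * (g * k * g⁻¹ * k⁻¹) * n⁻¹ := by
          rw [show g * (n * k) = n * (g * k) by rw [← mul_assoc, hgn, mul_assoc]]
          group
        rw [e]
        exact hKn.conj_mem _ hk' n
      have d3 : (ccSub H K hHn hKn).index ∣ Aπ'.index := Subgroup.index_dvd_of_le hsub
      exact hAπ'idx p hp (h.trans d3)
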